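/- Define B(t) = Σ_{k=(t−s−1)_+}^{t−1} ‖x(k+1) − x(k)‖^2. Then for every t ∈ ℕ, F(x(t+s+1)) + (1/2)(1/η − L − 2s·L·√p)·B(t+s+1) ≤ F(x(t)) + (1/2)·s·L·√p·B(t). -/

import Mathlib

open Filter Topology RealInnerProductSpace

noncomputable abbrev EE (p : ℕ) (d : Fin p → ℕ) : Type :=
  PiLp 2 (fun i : Fin p => EuclideanSpace ℝ (Fin (d i)))

lemma descent_lemma_aux {F : Type*} [NormedAddCommGroup F] [InnerProductSpace ℝ F]
    [CompleteSpace F]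
    (f : F → ℝ) (f' : F → F) (hf : ∀ y, HasGradientAt f (f' y) y)
    {L : ℝ} (hlip : ∀ y z, ‖f' y - f' z‖ ≤ L * ‖y - z‖) (a b : F) :
    f b ≤ f a + ⟪f' a, b - a⟫ + L / 2 * ‖b - a‖ ^ 2 := by
  set Δ := b - a with hΔ
  have hpath : ∀ θ : ℝ, HasDerivAt (fun θ : ℝ => a + θ • Δ) Δ θ := by
    intro θ
    simpa using (((hasDerivAt_id θ).smul_const Δ).const_add a)
  have hφ : ∀ θ : ℝ, HasDerivAt (fun θ : ℝ => f (a + θ • Δ)) ⟪f' (a + θ • Δ), Δ⟫ θ := by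
    intro θ
    have := ((hf (a + θ • Δ)).hasFDerivAt).comp_hasDerivAt θ (hpath θ)
    simpa [InnerProductSpace.toDual_apply_apply, Function.comp_def] using this
  set g : ℝ → ℝ := fun θ => f (a + θ • Δ) - θ * ⟪f' a, Δ⟫ - L / 2 * θ ^ 2 * ‖Δ‖ ^ 2 with hg
  have hg' : ∀ θ : ℝ, HasDerivAt g
      (⟪f' (a + θ • Δ), Δ⟫ - ⟪f' a, Δ⟫ - L * θ * ‖Δ‖ ^ 2) θ := by
    intro θ
    have h2 : HasDerivAt (fun θ : ℝ => θ * ⟪f' a, Δ⟫) ⟪f' a, Δ⟫ θ := by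
      simpa using (hasDerivAt_id θ).mul_const ⟪f' a, Δ⟫
    have h3 : HasDerivAt (fun θ : ℝ => L / 2 * θ ^ 2 * ‖Δ‖ ^ 2) (L * θ * ‖Δ‖ ^ 2) θ := by
      have := ((hasDerivAt_pow 2 θ).const_mul (L / 2)).mul_const (‖Δ‖ ^ 2)
      refine this.congr_deriv ?_
      rw [show (2:ℕ) - 1 = 1 from rfl]
      push_cast
      ring
    exact ((hφ θ).sub h2).sub h3
  have hanti : AntitoneOn g (Set.Icc (0:ℝ) 1) := by
    apply antitoneOn_of_deriv_nonpos (convex_Icc 0 1)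
    · exact fun θ _ => (hg' θ).continuousAt.continuousWithinAt
    · exact fun θ _ => (hg' θ).differentiableAt.differentiableWithinAt
    · intro θ hθ
      rw [interior_Icc] at hθ
      rw [(hg' θ).deriv]
      have h1 : ⟪f' (a + θ • Δ), Δ⟫ - ⟪f' a, Δ⟫ = ⟪f' (a + θ • Δ) - f' a, Δ⟫ := by
        rw [inner_sub_left]
      rw [h1]
      have h2 : ⟪f' (a + θ • Δ) - f' a, Δ⟫ ≤ ‖f' (a + θ • Δ) - f' a‖ * ‖Δ‖ :=
        real_inner_le_norm _ _
      have h3 : ‖f' (a + θ • Δ) - f' a‖ ≤ L * (θ * ‖Δ‖) := by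
        have := hlip (a + θ • Δ) a
        simpa [norm_smul, abs_of_nonneg hθ.1.le] using this
      nlinarith [norm_nonneg Δ, norm_nonneg (f' (a + θ • Δ) - f' a), hθ.1.le]
  have h01 := hanti (Set.left_mem_Icc.2 zero_le_one) (Set.right_mem_Icc.2 zero_le_one)
    zero_le_one
  have hb : a + (1:ℝ) • Δ = b := by simp [hΔ]
  simp only [hg, hb, one_mul, one_pow, zero_smul, add_zero, zero_mul, sub_zero,
    zero_pow, mul_zero] at h01
  linarith

lemma ereal_sum_ne_bot {ι : Type*} (s : Finset ι) (h : ι → EReal)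
    (hb : ∀ i ∈ s, h i ≠ ⊥) : ∑ i ∈ s, h i ≠ ⊥ := by
  revert hb
  classical
  induction s using Finset.induction_on with
  | empty => simp
  | @insert a s' hni ih =>
    intro hb
    rw [Finset.sum_insert hni]
    rw [Ne, EReal.add_eq_bot_iff]
    push_neg
    exact ⟨hb a (Finset.mem_insert_self a s'), ih fun i hi => hb i (Finset.mem_insert_of_mem hi)⟩

lemma ereal_sum_ne_top {ι : Type*} (s : Finset ι) (h : ι → EReal)
    (hb : ∀ i ∈ s, h i ≠ ⊥) (ht : ∑ i ∈ s, h i ≠ ⊤) : ∀ i ∈ s, h i ≠ ⊤ := by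
  classical
  intro i hi hcon
  apply ht
  rw [← Finset.add_sum_erase _ _ hi, hcon]
  exact EReal.top_add_of_ne_bot (ereal_sum_ne_bot _ _ fun j hj => hb j (Finset.mem_erase.1 hj).2)

lemma ereal_coe_sum {ι : Type*} (s : Finset ι) (h : ι → ℝ) :
    ((∑ i ∈ s, h i : ℝ) : EReal) = ∑ i ∈ s, (h i : EReal) := by
  classical
  induction s using Finset.induction_on with
  | empty => simp
  | @insert a s' hni ih =>
    rw [Finset.sum_insert hni, Finset.sum_insert hni, EReal.coe_add, ih]

set_option maxHeartbeats 2000000 in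
theorem stmt_9
    (p s : ℕ) (hp : 1 ≤ p) (d : Fin p → ℕ) (hd : ∀ i, 1 ≤ d i)
    (τ : Fin p → Fin p → ℕ → ℕ)
    (hτ_le : ∀ i j t, τ i j t ≤ t)
    (hτ_ge : ∀ i j t, t ≤ τ i j t + s)
    (hτ_self : ∀ i t, τ i i t = t)
    (x : (i : Fin p) → ℕ → EuclideanSpace ℝ (Fin (d i)))
    (X : ℕ → EE p d) (hX : ∀ t i, X t i = x i t)
    (Xl : Fin p → ℕ → EE p d) (hXl : ∀ i t j, Xl i t j = x j (τ i j t))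
    (T : Fin p → Set ℕ)
    (hT : ∀ i t, ∃ k ∈ T i, t ≤ k ∧ k ≤ t + s)
    (η L : ℝ) (hη : 0 < η) (hL : 0 < L)
    (f : EE p d → ℝ) (f' : EE p d → EE p d)
    (hf : ∀ y, HasGradientAt f (f' y) y)
    (hlip : ∀ y z, ‖f' y - f' z‖ ≤ L * ‖y - z‖)
    (g : (i : Fin p) → EuclideanSpace ℝ (Fin (d i)) → EReal)
    (hg_nebot : ∀ i z, g i z ≠ ⊥)
    (hg_proper : ∀ i, ∃ z, g i z ≠ ⊤)
    (hg_lsc : ∀ i, LowerSemicontinuous (g i))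
    (F : EE p d → EReal)
    (hF : ∀ y, F y = (f y : EReal) + ∑ i, g i (y i))
    (hF_bdd : ∃ m : ℝ, ∀ y, (m : EReal) ≤ F y)
    (hF0 : F (X 0) < ⊤)
    (hskip : ∀ i t, t ∉ T i → x i (t + 1) = x i t)
    (hupd : ∀ i t, t ∈ T i → ∀ z : EuclideanSpace ℝ (Fin (d i)),
      g i (x i (t + 1)) +
        ((1 / (2 * η) * ‖x i (t + 1) - (x i t - η • f' (Xl i t) i)‖ ^ 2 : ℝ) : EReal)
      ≤ g i z + ((1 / (2 * η) * ‖z - (x i t - η • f' (Xl i t) i)‖ ^ 2 : ℝ) : EReal))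
    :
    ∀ t : ℕ,
      F (X (t + s + 1)) +
        ((1 / 2 * (1 / η - L - 2 * s * L * Real.sqrt p) *
            ∑ k ∈ Finset.Ico (t + s + 1 - (s + 1)) (t + s + 1), ‖X (k + 1) - X k‖ ^ 2 : ℝ) : EReal)
      ≤ F (X t) +
        ((1 / 2 * s * L * Real.sqrt p *
            ∑ k ∈ Finset.Ico (t - (s + 1)) t, ‖X (k + 1) - X k‖ ^ 2 : ℝ) : EReal) := by
  classical
  -- block increments
  set D : ℕ → EE p d := fun k => X (k + 1) - X k with hD
  have hDi : ∀ k i, D k i = x i (k + 1) - x i k := by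
    intro k i
    have h0 : D k i = X (k + 1) i - X k i := rfl
    rw [h0, hX, hX]
  -- finiteness of g along the iterates
  have htop : ∀ t i, g i (x i t) ≠ ⊤ := by
    intro t
    induction t with
    | zero =>
      rw [hF (X 0)] at hF0
      have hsumt : (∑ i, g i (X 0 i)) ≠ ⊤ := by
        intro hcon
        rw [hcon, EReal.add_top_of_ne_bot (EReal.coe_ne_bot _)] at hF0
        exact (lt_irrefl _ hF0)
      intro i
      have := ereal_sum_ne_top Finset.univ (fun i => g i (X 0 i))
        (fun i _ => hg_nebot i (X 0 i)) hsumt i (Finset.mem_univ i)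
      simp only at this
      rwa [hX 0 i] at this
    | succ t ih =>
      intro i
      by_cases ht : t ∈ T i
      · have h := hupd i t ht (x i t)
        have hrhs : g i (x i t) + ((1 / (2 * η) * ‖x i t - (x i t - η • f' (Xl i t) i)‖ ^ 2 : ℝ) : EReal) < ⊤ :=
          EReal.add_lt_top (ih i) (EReal.coe_ne_top _)
        have hlhs := lt_of_le_of_lt h hrhs
        intro hcon
        rw [hcon, EReal.top_add_of_ne_bot (EReal.coe_ne_bot _)] at hlhs
        exact (lt_irrefl _ hlhs)
      · rw [hskip i t ht]
        exact ih i
  -- real-valued surrogates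
  set G : Fin p → ℕ → ℝ := fun i t => (g i (x i t)).toReal with hGdef
  have hGcoe : ∀ i t, ((G i t : ℝ) : EReal) = g i (x i t) := fun i t =>
    EReal.coe_toReal (htop t i) (hg_nebot i (x i t))
  -- real prox inequality, valid for every i and t
  have hprox : ∀ i t, G i (t + 1) + 1 / (2 * η) * ‖x i (t + 1) - x i t‖ ^ 2
      + ⟪x i (t + 1) - x i t, f' (Xl i t) i⟫ ≤ G i t := by
    intro i t
    by_cases ht : t ∈ T i
    · have h := hupd i t ht (x i t)
      rw [← hGcoe i (t + 1), ← hGcoe i t, ← EReal.coe_add, ← EReal.coe_add,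
        EReal.coe_le_coe_iff] at h
      set Δ := x i (t + 1) - x i t with hΔdef
      set v := f' (Xl i t) i with hvdef
      have hvec : x i (t + 1) - (x i t - η • v) = Δ + η • v := by
        rw [hΔdef]; abel
      have hvec2 : x i t - (x i t - η • v) = η • v := by abel
      rw [hvec, hvec2, norm_add_sq_real, real_inner_smul_right] at h
      have he : 1 / (2 * η) * (2 * (η * ⟪Δ, v⟫)) = ⟪Δ, v⟫ := by
        field_simp
      rw [mul_add, mul_add, he] at h
      linarith
    · have hx1 : x i (t + 1) = x i t := hskip i t ht
      simp [hGdef, hx1]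
  set Φ : ℕ → ℝ := fun t => f (X t) + ∑ i, G i t with hΦdef
  -- delay bound
  have hdelay : ∀ i t, ‖X t - Xl i t‖ ≤ ∑ k ∈ Finset.Ico (t - s) t, ‖D k‖ := by
    intro i t
    set v : ℕ → EE p d := fun k => WithLp.toLp 2 (fun j => if τ i j t ≤ k then x j (k + 1) - x j k else 0)
      with hvdef
    have hident : X t - Xl i t = ∑ k ∈ Finset.Ico (t - s) t, v k := by
      ext j : 1
      have h1 : (X t - Xl i t) j = x j t - x j (τ i j t) := by
        have h0 : (X t - Xl i t) j = X t j - Xl i t j := rfl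
        rw [h0, hX, hXl]
      have h2 : (∑ k ∈ Finset.Ico (t - s) t, v k) j
          = ∑ k ∈ Finset.Ico (t - s) t, v k j := by
        rw [WithLp.ofLp_sum]; exact Finset.sum_apply j _ _
      rw [h1, h2]
      have h3 : ∀ k, v k j = if τ i j t ≤ k then x j (k + 1) - x j k else 0 := fun k => rfl
      simp only [h3]
      rw [Finset.sum_ite, Finset.sum_const_zero, add_zero]
      have hfil : (Finset.Ico (t - s) t).filter (fun k => τ i j t ≤ k)
          = Finset.Ico (τ i j t) t := by
        ext k
        simp only [Finset.mem_filter, Finset.mem_Ico]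
        have := hτ_ge i j t
        omega
      rw [hfil]
      rw [Finset.sum_Ico_eq_sub _ (hτ_le i j t), Finset.sum_range_sub (fun k => x j k),
        Finset.sum_range_sub (fun k => x j k)]
      abel
    rw [hident]
    refine le_trans (norm_sum_le _ _) (Finset.sum_le_sum ?_)
    intro k _
    have hsq : ‖v k‖ ^ 2 ≤ ‖D k‖ ^ 2 := by
      rw [PiLp.norm_sq_eq_of_L2, PiLp.norm_sq_eq_of_L2]
      refine Finset.sum_le_sum ?_
      intro j _
      have h3 : v k j = if τ i j t ≤ k then x j (k + 1) - x j k else 0 := rfl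
      rw [h3, hDi]
      by_cases hk : τ i j t ≤ k
      · rw [if_pos hk]
      · rw [if_neg hk]
        simp [sq_nonneg]
    exact (pow_le_pow_iff_left₀ (norm_nonneg _) (norm_nonneg _) two_ne_zero).1 hsq
  -- per-step inequality
  have hstep : ∀ u, Φ (u + 1) + (1 / (2 * η) - L / 2 - s * L * Real.sqrt p / 2) * ‖D u‖ ^ 2
      ≤ Φ u + L * Real.sqrt p / 2 * ∑ k ∈ Finset.Ico (u - s) u, ‖D k‖ ^ 2 := by
    have hblock : ∀ (w : EE p d) (i : Fin p), ‖w i‖ ≤ ‖w‖ := by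
      intro w i
      have hsq : ‖w i‖ ^ 2 ≤ ‖w‖ ^ 2 :=
        calc ‖w i‖ ^ 2 ≤ ∑ j, ‖w j‖ ^ 2 :=
              Finset.single_le_sum (fun j _ => sq_nonneg ‖w j‖) (Finset.mem_univ i)
          _ = ‖w‖ ^ 2 := (PiLp.norm_sq_eq_of_L2 _ w).symm
      exact (pow_le_pow_iff_left₀ (norm_nonneg _) (norm_nonneg _) two_ne_zero).1 hsq
    have hsqrtp : Real.sqrt p ^ 2 = p := Real.sq_sqrt (Nat.cast_nonneg p)
    have hsqrtp0 : 0 ≤ Real.sqrt p := Real.sqrt_nonneg p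
    intro u
    have hS0 : 0 ≤ ∑ k ∈ Finset.Ico (u - s) u, ‖D k‖ :=
      Finset.sum_nonneg fun k _ => norm_nonneg _
    have hA0 : (0:ℝ) ≤ ‖D u‖ := norm_nonneg _
    -- descent step
    have hXDu : X (u + 1) - X u = D u := rfl
    have hdes := descent_lemma_aux f f' hf hlip (X u) (X (u + 1))
    rw [hXDu] at hdes
    have hinner : ⟪f' (X u), D u⟫ = ∑ i, ⟪f' (X u) i, D u i⟫ := PiLp.inner_apply _ _
    -- summed prox step
    have hproxsum : (∑ i, G i (u + 1)) + 1 / (2 * η) * ‖D u‖ ^ 2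
        + ∑ i, ⟪D u i, f' (Xl i u) i⟫ ≤ ∑ i, G i u := by
      have h1 := Finset.sum_le_sum (fun i (_ : i ∈ Finset.univ) => hprox i u)
      rw [Finset.sum_add_distrib, Finset.sum_add_distrib] at h1
      have h2 : ∑ i, 1 / (2 * η) * ‖x i (u + 1) - x i u‖ ^ 2 = 1 / (2 * η) * ‖D u‖ ^ 2 := by
        rw [← Finset.mul_sum, PiLp.norm_sq_eq_of_L2 _ (D u)]
        congr 1
        exact Finset.sum_congr rfl fun i _ => by rw [hDi]
      have h3 : ∀ i : Fin p, ⟪x i (u + 1) - x i u, f' (Xl i u) i⟫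
          = ⟪D u i, f' (Xl i u) i⟫ := fun i => by rw [hDi]
      rw [h2] at h1
      calc (∑ i, G i (u + 1)) + 1 / (2 * η) * ‖D u‖ ^ 2 + ∑ i, ⟪D u i, f' (Xl i u) i⟫
          = (∑ i, G i (u + 1)) + 1 / (2 * η) * ‖D u‖ ^ 2
            + ∑ i, ⟪x i (u + 1) - x i u, f' (Xl i u) i⟫ := by
            rw [Finset.sum_congr rfl fun i _ => (h3 i)]
        _ ≤ ∑ i, G i u := h1
    -- cross term bound
    have hcross : (∑ i, ⟪f' (X u) i, D u i⟫) - ∑ i, ⟪D u i, f' (Xl i u) i⟫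
        ≤ L * (∑ k ∈ Finset.Ico (u - s) u, ‖D k‖) * (Real.sqrt p * ‖D u‖) := by
      have hterm : ∀ i : Fin p, ⟪f' (X u) i, D u i⟫ - ⟪D u i, f' (Xl i u) i⟫
          ≤ ‖D u i‖ * (L * ∑ k ∈ Finset.Ico (u - s) u, ‖D k‖) := by
        intro i
        have he1 : ⟪f' (X u) i, D u i⟫ - ⟪D u i, f' (Xl i u) i⟫
            = ⟪D u i, f' (X u) i - f' (Xl i u) i⟫ := by
          rw [inner_sub_right, real_inner_comm]
        rw [he1]
        have he2 : ⟪D u i, f' (X u) i - f' (Xl i u) i⟫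
            ≤ ‖D u i‖ * ‖f' (X u) i - f' (Xl i u) i‖ := real_inner_le_norm _ _
        have he3 : ‖f' (X u) i - f' (Xl i u) i‖
            ≤ L * ∑ k ∈ Finset.Ico (u - s) u, ‖D k‖ := by
          have hb : f' (X u) i - f' (Xl i u) i = (f' (X u) - f' (Xl i u)) i := rfl
          rw [hb]
          refine le_trans (hblock _ i) (le_trans (hlip _ _) ?_)
          exact mul_le_mul_of_nonneg_left (hdelay i u) hL.le
        exact le_trans he2 (mul_le_mul_of_nonneg_left he3 (norm_nonneg _))
      rw [← Finset.sum_sub_distrib]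
      refine le_trans (Finset.sum_le_sum fun i (_ : i ∈ Finset.univ) => hterm i) ?_
      rw [← Finset.sum_mul]
      have hsum1 : ∑ i, ‖D u i‖ ≤ Real.sqrt p * ‖D u‖ := by
        have hq : (∑ i, ‖D u i‖) ^ 2 ≤ (Real.sqrt p * ‖D u‖) ^ 2 := by
          calc (∑ i, ‖D u i‖) ^ 2
              ≤ (Finset.univ : Finset (Fin p)).card * ∑ i, ‖D u i‖ ^ 2 :=
                sq_sum_le_card_mul_sum_sq
            _ = (p : ℝ) * ‖D u‖ ^ 2 := by
                rw [Finset.card_univ, Fintype.card_fin, PiLp.norm_sq_eq_of_L2 _ (D u)]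
            _ = (Real.sqrt p * ‖D u‖) ^ 2 := by rw [mul_pow, hsqrtp]
        exact (pow_le_pow_iff_left₀ (Finset.sum_nonneg fun i _ => norm_nonneg _)
          (mul_nonneg hsqrtp0 hA0) two_ne_zero).1 hq
      calc (∑ i, ‖D u i‖) * (L * ∑ k ∈ Finset.Ico (u - s) u, ‖D k‖)
          ≤ (Real.sqrt p * ‖D u‖) * (L * ∑ k ∈ Finset.Ico (u - s) u, ‖D k‖) :=
            mul_le_mul_of_nonneg_right hsum1 (mul_nonneg hL.le hS0)
        _ = L * (∑ k ∈ Finset.Ico (u - s) u, ‖D k‖) * (Real.sqrt p * ‖D u‖) := by ring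
    -- AM-GM
    have hamgm : L * (∑ k ∈ Finset.Ico (u - s) u, ‖D k‖) * (Real.sqrt p * ‖D u‖) ≤
        L * Real.sqrt p / 2 * (∑ k ∈ Finset.Ico (u - s) u, ‖D k‖ ^ 2)
        + s * L * Real.sqrt p / 2 * ‖D u‖ ^ 2 := by
      have h1 : (∑ k ∈ Finset.Ico (u - s) u, ‖D k‖) * ‖D u‖
          ≤ (∑ k ∈ Finset.Ico (u - s) u, ‖D k‖ ^ 2) / 2
          + ((Finset.Ico (u - s) u).card : ℝ) * ‖D u‖ ^ 2 / 2 := by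
        rw [Finset.sum_mul]
        have h2 : ∀ k ∈ Finset.Ico (u - s) u, ‖D k‖ * ‖D u‖ ≤ (‖D k‖ ^ 2 + ‖D u‖ ^ 2) / 2 := by
          intro k _
          nlinarith [sq_nonneg (‖D k‖ - ‖D u‖)]
        refine le_trans (Finset.sum_le_sum h2) (le_of_eq ?_)
        rw [← Finset.sum_div, Finset.sum_add_distrib, Finset.sum_const, nsmul_eq_mul]
        ring
      have hcard : ((Finset.Ico (u - s) u).card : ℝ) ≤ (s : ℝ) := by
        rw [Nat.card_Ico]
        have hns : u - (u - s) ≤ s := by omega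
        exact_mod_cast hns
      have hLp0 : 0 ≤ L * Real.sqrt p := mul_nonneg hL.le hsqrtp0
      have h4 := mul_le_mul_of_nonneg_left h1 hLp0
      have h5 := mul_le_mul_of_nonneg_right hcard
        (mul_nonneg (mul_nonneg hLp0 (sq_nonneg ‖D u‖)) (by norm_num : (0:ℝ) ≤ 1/2))
      nlinarith [Finset.sum_nonneg (fun k (_ : k ∈ Finset.Ico (u - s) u) => sq_nonneg ‖D k‖)]
    -- combine
    rw [hinner] at hdes
    simp only [hΦdef]
    linarith [hcross, hamgm, hdes, hproxsum]
  -- summed inequality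
  have hsum : ∀ t, Φ (t + s + 1) +
      (1 / 2 * (1 / η - L - 2 * s * L * Real.sqrt p)) *
        (∑ k ∈ Finset.Ico t (t + s + 1), ‖D k‖ ^ 2)
      ≤ Φ t + (1 / 2 * s * L * Real.sqrt p) *
        (∑ k ∈ Finset.Ico (t - (s + 1)) t, ‖D k‖ ^ 2) := by
    intro t
    have hsqrtp0 : 0 ≤ Real.sqrt p := Real.sqrt_nonneg p
    have hstep' : ∀ u, Φ (u + 1) - Φ u
        + (1 / (2 * η) - L / 2 - s * L * Real.sqrt p / 2) * ‖D u‖ ^ 2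
        ≤ L * Real.sqrt p / 2 * ∑ k ∈ Finset.Ico (u - s) u, ‖D k‖ ^ 2 := by
      intro u
      linarith [hstep u]
    have hsummed := Finset.sum_le_sum
      (fun u (_ : u ∈ Finset.Ico t (t + s + 1)) => hstep' u)
    -- telescope
    have htel : ∑ u ∈ Finset.Ico t (t + s + 1), (Φ (u + 1) - Φ u) = Φ (t + s + 1) - Φ t := by
      rw [Finset.sum_Ico_eq_sub _ (by omega : t ≤ t + s + 1),
        Finset.sum_range_sub (fun n => Φ n), Finset.sum_range_sub (fun n => Φ n)]
      ring
    rw [Finset.sum_add_distrib, htel, ← Finset.mul_sum, ← Finset.mul_sum] at hsummed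
    -- double sum bound
    have hdouble : ∑ u ∈ Finset.Ico t (t + s + 1), ∑ k ∈ Finset.Ico (u - s) u, ‖D k‖ ^ 2
        ≤ (s : ℝ) * ((∑ k ∈ Finset.Ico (t - (s + 1)) t, ‖D k‖ ^ 2)
          + ∑ k ∈ Finset.Ico t (t + s + 1), ‖D k‖ ^ 2) := by
      have hrw : ∀ u ∈ Finset.Ico t (t + s + 1),
          ∑ k ∈ Finset.Ico (u - s) u, ‖D k‖ ^ 2
          = ∑ k ∈ Finset.Ico (t - (s + 1)) (t + s + 1),
              (if k ∈ Finset.Ico (u - s) u then ‖D k‖ ^ 2 else 0) := by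
        intro u hu
        rw [Finset.mem_Ico] at hu
        rw [Finset.sum_ite_mem]
        congr 1
        exact (Finset.inter_eq_right.mpr (Finset.Ico_subset_Ico (by omega) (by omega))).symm
      rw [Finset.sum_congr rfl hrw, Finset.sum_comm]
      have hbound : ∀ k ∈ Finset.Ico (t - (s + 1)) (t + s + 1),
          (∑ u ∈ Finset.Ico t (t + s + 1),
            (if k ∈ Finset.Ico (u - s) u then ‖D k‖ ^ 2 else 0))
          ≤ (s : ℝ) * ‖D k‖ ^ 2 := by
        intro k _
        rw [← Finset.sum_filter]
        rw [Finset.sum_const, nsmul_eq_mul]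
        have hcard : ((Finset.Ico t (t + s + 1)).filter
            (fun u => k ∈ Finset.Ico (u - s) u)).card ≤ s := by
          have hsub : (Finset.Ico t (t + s + 1)).filter
              (fun u => k ∈ Finset.Ico (u - s) u) ⊆ Finset.Ico (k + 1) (k + s + 1) := by
            intro u hu
            rw [Finset.mem_filter, Finset.mem_Ico, Finset.mem_Ico] at hu
            rw [Finset.mem_Ico]
            omega
          calc _ ≤ (Finset.Ico (k + 1) (k + s + 1)).card := Finset.card_le_card hsub
            _ = s := by rw [Nat.card_Ico]; omega
        exact mul_le_mul_of_nonneg_right (by exact_mod_cast hcard) (sq_nonneg _)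
      refine le_trans (Finset.sum_le_sum hbound) (le_of_eq ?_)
      rw [← Finset.mul_sum]
      rw [← Finset.sum_Ico_consecutive (fun k => ‖D k‖ ^ 2)
        (by omega : t - (s + 1) ≤ t) (by omega : t ≤ t + s + 1)]
    have key := le_trans hsummed
      (mul_le_mul_of_nonneg_left hdouble (by positivity : (0:ℝ) ≤ L * Real.sqrt p / 2))
    rw [← sub_nonpos]
    have hring : Φ (t + s + 1) +
        (1 / 2 * (1 / η - L - 2 * s * L * Real.sqrt p)) *
          (∑ k ∈ Finset.Ico t (t + s + 1), ‖D k‖ ^ 2)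
        - (Φ t + (1 / 2 * s * L * Real.sqrt p) *
          (∑ k ∈ Finset.Ico (t - (s + 1)) t, ‖D k‖ ^ 2))
        = (Φ (t + s + 1) - Φ t
          + (1 / (2 * η) - L / 2 - s * L * Real.sqrt p / 2) *
            (∑ k ∈ Finset.Ico t (t + s + 1), ‖D k‖ ^ 2))
        - (L * Real.sqrt p / 2 *
          ((s : ℝ) * ((∑ k ∈ Finset.Ico (t - (s + 1)) t, ‖D k‖ ^ 2)
            + ∑ k ∈ Finset.Ico t (t + s + 1), ‖D k‖ ^ 2))) := by
      ring
    rw [hring]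
    exact sub_nonpos.mpr key
  -- conversion to EReal
  have hFΦ : ∀ t, F (X t) = ((Φ t : ℝ) : EReal) := by
    intro t
    rw [hF, hΦdef]
    simp only [hX]
    rw [EReal.coe_add, ereal_coe_sum]
    congr 1
    exact Finset.sum_congr rfl fun i _ => (hGcoe i t).symm
  intro t
  rw [hFΦ, hFΦ, ← EReal.coe_add, ← EReal.coe_add, EReal.coe_le_coe_iff]
  have hidx : t + s + 1 - (s + 1) = t := by omega
  rw [hidx]
  have := hsum t
  simp only [hD] at this
  linarith
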